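/- Let T > 0 and let (a_n)_{n≥0} be a sequence of nonnegative real numbers with a_0 = 1 satisfying, for all n ≥ 0, a_{n+1} ≤ Σ_{k=0}^{n} 2^k · k! · C(n,k) · a_{n−k} · T^{k+1}, where C(n,k) is the binomial coefficient. Then a_n ≤ 2^n · n! · T^n for all n ≥ 0. -/

import Mathlib

/-- if `a 0 = 1`, `a n ≥ 0` and
`a (n+1) ≤ Σ_{k=0}^{n} 2^k k! C(n,k) a_{n−k} T^{k+1}`, then `a n ≤ 2^n n! T^n`. -/
theorem stmt8 (T : ℝ) (hT : 0 < T) (a : ℕ → ℝ) (ha : ∀ n, 0 ≤ a n) (h0 : a 0 = 1)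
    (hrec : ∀ n : ℕ, a (n + 1) ≤ ∑ k ∈ Finset.range (n + 1),
      2 ^ k * (k.factorial : ℝ) * (n.choose k : ℝ) * a (n - k) * T ^ (k + 1)) :
    ∀ n : ℕ, a n ≤ 2 ^ n * (n.factorial : ℝ) * T ^ n := by
  intro n
  induction n using Nat.strong_induction_on with
  | _ n ih =>
    match n with
    | 0 => simp [h0]
    | Nat.succ m =>
      calc a (m + 1) ≤ ∑ k ∈ Finset.range (m + 1),
            2 ^ k * (k.factorial : ℝ) * (m.choose k : ℝ) * a (m - k) * T ^ (k + 1) := hrec m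
        _ ≤ ∑ k ∈ Finset.range (m + 1),
            2 ^ k * (k.factorial : ℝ) * (m.choose k : ℝ) *
              (2 ^ (m - k) * ((m - k).factorial : ℝ) * T ^ (m - k)) * T ^ (k + 1) := by
            apply Finset.sum_le_sum
            intro k hk
            have hk' : k ≤ m := Nat.lt_succ_iff.mp (Finset.mem_range.mp hk)
            have := ih (m - k) (by omega)
            have hpos : (0:ℝ) ≤ 2 ^ k * (k.factorial : ℝ) * (m.choose k : ℝ) := by positivity
            have hT' : (0:ℝ) ≤ T ^ (k + 1) := by positivity
            exact mul_le_mul_of_nonneg_right (mul_le_mul_of_nonneg_left this hpos) hT'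
        _ = ∑ k ∈ Finset.range (m + 1),
            ((k.factorial : ℝ) * (m.choose k : ℝ) * ((m - k).factorial : ℝ)) *
              (2 ^ m * T ^ (m + 1)) := by
            apply Finset.sum_congr rfl
            intro k hk
            have hk' : k ≤ m := Nat.lt_succ_iff.mp (Finset.mem_range.mp hk)
            have e1 : (2:ℝ) ^ k * 2 ^ (m - k) = 2 ^ m := by
              rw [← pow_add]; congr 1; omega
            have e2 : T ^ (m - k) * T ^ (k + 1) = T ^ (m + 1) := by
              rw [← pow_add]; congr 1; omega
            rw [← e1, ← e2]; ring
        _ = ∑ k ∈ Finset.range (m + 1), ((m.factorial : ℝ)) * (2 ^ m * T ^ (m + 1)) := by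
            apply Finset.sum_congr rfl
            intro k hk
            have hk' : k ≤ m := Nat.lt_succ_iff.mp (Finset.mem_range.mp hk)
            congr 1
            have := Nat.choose_mul_factorial_mul_factorial hk'
            push_cast [← this]
            ring
        _ = (m + 1) * (m.factorial : ℝ) * (2 ^ m * T ^ (m + 1)) := by
            rw [Finset.sum_const, Finset.card_range]; push_cast; ring
        _ ≤ 2 ^ (m + 1) * ((m + 1).factorial : ℝ) * T ^ (m + 1) := by
            rw [Nat.factorial_succ]
            push_cast
            rw [pow_succ]
            have h2 : (0:ℝ) ≤ ((m:ℝ) + 1) * (m.factorial : ℝ) * (2 ^ m * (T ^ m * T)) := by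
              positivity
            have h3 : (2:ℝ) ^ (m + 1) * (((m:ℝ) + 1) * (m.factorial : ℝ)) * (T ^ m * T)
                = 2 * (((m:ℝ) + 1) * (m.factorial : ℝ) * (2 ^ m * (T ^ m * T))) := by ring
            linarith
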